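/- Let F be a field of characteristic zero, V an F-vector space, and k a natural number. Then the Koszul differential δ : ⋀^{k+1} V → (⋀^k V) ⊗ V is injective. -/

import Mathlib

open TensorProduct

/-- The `n`-th exterior power `⋀^n V` of an `F`-vector space `V` (the degree-`n` part
of the exterior algebra of `V`). -/
def ExtPower (F : Type*) [Field F] (n : ℕ) (V : Type*) [AddCommGroup V] [Module F V] :
    Type _ := ↥(⋀[F]^n V)

noncomputable instance (F : Type*) [Field F] (n : ℕ) (V : Type*) [AddCommGroup V]
    [Module F V] : AddCommGroup (ExtPower F n V) :=
  inferInstanceAs (AddCommGroup ↥(⋀[F]^n V))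

noncomputable instance (F : Type*) [Field F] (n : ℕ) (V : Type*) [AddCommGroup V]
    [Module F V] : Module F (ExtPower F n V) :=
  inferInstanceAs (Module F ↥(⋀[F]^n V))

/-- The wedge product `v₀ ∧ ⋯ ∧ v_{n-1} ∈ ⋀^n V` of an `n`-tuple of vectors of `V`. -/
noncomputable def wedge (F : Type*) [Field F] {V : Type*} [AddCommGroup V] [Module F V]
    (n : ℕ) (v : Fin n → V) : ExtPower F n V :=
  ⟨ExteriorAlgebra.ιMulti F n v, ExteriorAlgebra.ιMulti_range F n (Set.mem_range_self v)⟩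

/-- Auxiliary sign computation: multiplying the wedge with the `i`-th entry omitted by the
`i`-th entry on the left gives `(-1)^i` times the full wedge. -/
lemma koszul_aux_sign (F : Type*) [Field F] {V : Type*} [AddCommGroup V] [Module F V]
    (k : ℕ) (v : Fin (k+1) → V) (i : Fin (k+1)) :
    ExteriorAlgebra.ι F (v i) * ExteriorAlgebra.ιMulti F k (fun j => v (i.succAbove j)) =
      ((-1 : F) ^ (i : ℕ)) • ExteriorAlgebra.ιMulti F (k+1) v := by
  have hcomp : v ∘ (i.cycleRange).symm = Fin.cons (v i) (fun j => v (i.succAbove j)) := by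
    funext j
    induction j using Fin.cases with
    | zero => simp
    | succ j => simp
  have := (ExteriorAlgebra.ιMulti F (k+1)).map_perm v (i.cycleRange).symm
  rw [hcomp] at this
  rw [ExteriorAlgebra.ιMulti_succ_apply] at this
  simp only [Fin.cons_zero, Matrix.vecTail, Function.comp_def, Fin.cons_succ] at this
  rw [this, Equiv.Perm.sign_symm, Fin.sign_cycleRange, Units.smul_def,
    ← Int.cast_smul_eq_zsmul F]
  push_cast
  ring_nf

/-- The span of the wedges is everything. -/
lemma koszul_aux_span (F : Type*) [Field F] {V : Type*} [AddCommGroup V] [Module F V]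
    (n : ℕ) : Submodule.span F (Set.range (wedge F n (V := V))) = ⊤ := by
  apply Submodule.map_injective_of_injective (Submodule.injective_subtype (⋀[F]^n V))
  erw [Submodule.map_span, Submodule.map_top, Submodule.range_subtype, ← Set.range_comp]
  exact ExteriorAlgebra.ιMulti_span_fixedDegree F n

/-- Over a field of characteristic zero, the Koszul differential
`δ : ⋀^{k+1} V → (⋀^k V) ⊗ V` is injective. -/
theorem koszul_differential_injective (F : Type*) [Field F] [CharZero F]
    (V : Type*) [AddCommGroup V] [Module F V] (k : ℕ)
    (δ : (ExtPower F (k+1) V) →ₗ[F] (ExtPower F k V) ⊗[F] V)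
    (hδ : ∀ v : Fin (k+1) → V,
      δ (wedge F (k+1) v) =
        ∑ i : Fin (k+1), ((-1 : F) ^ (k - (i : ℕ))) •
          (wedge F k (fun j => v (i.succAbove j)) ⊗ₜ[F] v i)) :
    Function.Injective δ := by
  classical
  set A := ExteriorAlgebra F V
  -- the "multiplication" map (ω ⊗ v) ↦ ι v * ω, into the full exterior algebra
  let B : ExtPower F k V →ₗ[F] V →ₗ[F] A :=
    (((LinearMap.mul F A).flip).comp (Submodule.subtype (⋀[F]^k V))).compl₂
      (ExteriorAlgebra.ι F)
  let m : (ExtPower F k V) ⊗[F] V →ₗ[F] A := TensorProduct.lift B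
  set c : F := ((k : F) + 1) * (-1 : F) ^ k with hc
  have hcne : c ≠ 0 := by
    apply mul_ne_zero
    · exact Nat.cast_add_one_ne_zero k
    · exact pow_ne_zero _ (by norm_num)
  -- key computation on wedges
  have key : ∀ v : Fin (k+1) → V,
      m (δ (wedge F (k+1) v)) = c • (ExteriorAlgebra.ιMulti F (k+1) v) := by
    intro v
    rw [hδ, map_sum]
    have hterm : ∀ i : Fin (k+1),
        m (((-1 : F) ^ (k - (i : ℕ))) •
            (wedge F k (fun j => v (i.succAbove j)) ⊗ₜ[F] v i)) =
          ((-1 : F) ^ k) • ExteriorAlgebra.ιMulti F (k+1) v := by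
      intro i
      rw [map_smul]
      have hm : m (wedge F k (fun j => v (i.succAbove j)) ⊗ₜ[F] v i) =
          ExteriorAlgebra.ι F (v i) *
            ExteriorAlgebra.ιMulti F k (fun j => v (i.succAbove j)) := rfl
      rw [hm, koszul_aux_sign F k v i, smul_smul, ← pow_add]
      congr 2
      omega
    rw [Finset.sum_congr rfl (fun i _ => hterm i), Finset.sum_const, Finset.card_univ,
      Fintype.card_fin, hc, ← Nat.cast_smul_eq_nsmul F, smul_smul]
    congr 1
    push_cast
    ring
  -- extend to all elements by linearity
  have hall : ∀ x : ExtPower F (k+1) V,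
      m (δ x) = c • (Submodule.subtype (⋀[F]^(k+1) V) x) := by
    have heq : m.comp δ =
        c • (Submodule.subtype (⋀[F]^(k+1) V) :
          ExtPower F (k+1) V →ₗ[F] A) := by
      apply LinearMap.ext_on (koszul_aux_span F (k+1) (V := V))
      rintro x ⟨v, rfl⟩
      exact key v
    intro x
    exact LinearMap.congr_fun heq x
  -- conclude injectivity
  intro a b hab
  have h1 : c • (Submodule.subtype (⋀[F]^(k+1) V) a) =
      c • (Submodule.subtype (⋀[F]^(k+1) V) b) := by
    rw [← hall a, ← hall b, hab]
  have h2 := smul_right_injective A hcne h1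
  exact Subtype.ext (by simpa using h2)
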